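/- Let P be an n×n complex orthogonal projection matrix and let Ψ : [0,∞) → M_n(ℂ) be measurable with x ↦ Ψ(x)†Ψ(x) integrable and ∫₀^∞ Ψ(x)†Ψ(x) dx = P. If D and D̂ are n×n complex matrices satisfying Ψ(x)·D = Ψ(x)·D̂ for all x ≥ 0, D = P·D, and D̂ = P·D̂, then D = D̂. (Uniqueness of the bound-state dependency matrix, Theorem 4.1(a).) -/

import Mathlib

open Matrix MeasureTheory Set

attribute [local instance] Matrix.normedAddCommGroup Matrix.normedSpace

/-- Theorem 4.1(a): uniqueness of the bound-state dependency matrix.  If `P` is an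
orthogonal projection, `Ψ : [0,∞) → M_n(ℂ)` is measurable with `Ψ†Ψ` integrable and
`∫₀^∞ Ψ(x)†Ψ(x) dx = P`, and `D, D̂` satisfy `Ψ(x)·D = Ψ(x)·D̂` for all `x ≥ 0`,
`D = P·D`, `D̂ = P·D̂`, then `D = D̂`. -/
theorem dependency_matrix_unique {n : ℕ}
    (P : Matrix (Fin n) (Fin n) ℂ)
    (hPproj : P * P = P) (hPherm : Pᴴ = P)
    (Ψ : ℝ → Matrix (Fin n) (Fin n) ℂ)
    (hmeas : AEStronglyMeasurable Ψ (volume.restrict (Set.Ioi (0:ℝ))))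
    (hint : @IntegrableOn _ _ _ PseudoMetricSpace.toUniformSpace.toTopologicalSpace _
      (fun x => (Ψ x)ᴴ * Ψ x) (Set.Ioi (0:ℝ)) volume)
    (hP : ∫ x in Set.Ioi (0:ℝ), (Ψ x)ᴴ * Ψ x = P)
    (D D' : Matrix (Fin n) (Fin n) ℂ)
    (h1 : ∀ x ≥ (0:ℝ), Ψ x * D = Ψ x * D')
    (h2 : D = P * D) (h3 : D' = P * D') :
    D = D' := by
  have comm : ∀ E : Matrix (Fin n) (Fin n) ℂ,
      (∫ x in Set.Ioi (0:ℝ), (Ψ x)ᴴ * Ψ x * E) = P * E := by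
    intro E
    let L := LinearMap.toContinuousLinearMap (LinearMap.mulRight ℂ E)
    have h := L.integral_comp_comm hint
    rw [hP] at h
    exact h
  have hD : P * D = P * D' := by
    rw [← comm D, ← comm D']
    refine setIntegral_congr_fun measurableSet_Ioi (fun x hx => ?_)
    simp only [mul_assoc, h1 x (le_of_lt hx)]
  rw [h2, h3, hD]
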